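/- For all bimoulds A and B, one has push(swamu(A,B)) = answamu(push(B), push(A)). -/

import Mathlib

/-- A bimould: a function assigning to every finite sequence of pairs `(u, v)` of
elements of `K` an element of `R`. -/
abbrev Bimould (K R : Type*) := List (K × K) → R

variable {K R : Type*} [CommRing K] [CommRing R]

/-- The (non-commutative) mould product `mu`:
`mu(A,B)(w) = Σ_{w = a·b} A(a) B(b)` over all prefix/suffix decompositions of `w`. -/
def mu (A B : Bimould K R) : Bimould K R :=
  fun w => ∑ i ∈ Finset.range (w.length + 1), A (w.take i) * B (w.drop i)

/-- The sequence transformation underlying `swap`: for `w = ((u_1,v_1),…,(u_r,v_r))` it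
returns `((v_r, u_1+⋯+u_r), (v_{r-1}-v_r, u_1+⋯+u_{r-1}), …, (v_1-v_2, u_1))`. -/
def swapSeq (w : List (K × K)) : List (K × K) :=
  List.ofFn fun i : Fin w.length =>
    ((w.getD (w.length - 1 - (i : ℕ)) (0, 0)).2 - (w.getD (w.length - (i : ℕ)) (0, 0)).2,
      ((w.take (w.length - (i : ℕ))).map Prod.fst).sum)

/-- The involution `swap`. -/
def swap (A : Bimould K R) : Bimould K R := fun w => A (swapSeq w)

/-- The involution `anti`, reversing the sequence of letters. -/
def anti (A : Bimould K R) : Bimould K R := fun w => A w.reverse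

/-- `swamu`, the `swap`-conjugation of `mu`. -/
def swamu (A B : Bimould K R) : Bimould K R := swap (mu (swap A) (swap B))

/-- `answamu`, the `swap ∘ anti`-conjugation of `mu`. -/
def answamu (A B : Bimould K R) : Bimould K R :=
  anti (swap (mu (swap (anti A)) (swap (anti B))))

/-- The `push` operator:
`push(A)((u_1,v_1),…,(u_r,v_r)) = A((-u_1-⋯-u_r, -v_r), (u_1, v_1-v_r), …, (u_{r-1}, v_{r-1}-v_r))`
and `push(A)(∅) = A(∅)`. -/
def push (A : Bimould K R) : Bimould K R := fun w =>
  match w with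
  | [] => A []
  | x :: xs =>
      let v : K := ((x :: xs).getD ((x :: xs).length - 1) (0, 0)).2
      A ((-((x :: xs).map Prod.fst).sum, -v) ::
          ((x :: xs).take ((x :: xs).length - 1)).map fun p => (p.1, p.2 - v))

set_option maxHeartbeats 1000000
section Aux

def pushSeq (w : List (K × K)) : List (K × K) :=
  match w with
  | [] => []
  | x :: xs =>
      let v : K := ((x :: xs).getD ((x :: xs).length - 1) (0, 0)).2
      (-((x :: xs).map Prod.fst).sum, -v) ::
        ((x :: xs).take ((x :: xs).length - 1)).map fun p => (p.1, p.2 - v)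

lemma length_swapSeq (w : List (K × K)) : (swapSeq w).length = w.length := by
  simp [swapSeq]

lemma length_pushSeq (w : List (K × K)) : (pushSeq w).length = w.length := by
  cases w with
  | nil => rfl
  | cons x xs => simp [pushSeq]

lemma getD_def (l : List (K × K)) (k : ℕ) :
    l.getD k (0, 0) = if h : k < l.length then l[k] else (0, 0) := by
  split
  · exact List.getD_eq_getElem l _ ‹_›
  · exact List.getD_eq_default l _ (by omega)

lemma sumTakeFst (l : List (K × K)) (m : ℕ) :
    ((l.take m).map Prod.fst).sum
      = ∑ j ∈ Finset.range (min m l.length), (l.getD j (0, 0)).1 := by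
  induction l generalizing m with
  | nil => simp
  | cons a t ih =>
    cases m with
    | zero => simp
    | succ m =>
      simp only [List.take_succ_cons, List.map_cons, List.sum_cons, ih]
      rw [show min (m + 1) (a :: t).length = (min m t.length) + 1 by simp,
        Finset.sum_range_succ']
      simp [add_comm]

lemma swapSeq_getElem (w : List (K × K)) (k : ℕ) (h : k < (swapSeq w).length) :
    (swapSeq w)[k] = ((w.getD (w.length - 1 - k) (0, 0)).2 - (w.getD (w.length - k) (0, 0)).2,
      ((w.take (w.length - k)).map Prod.fst).sum) := by
  simp [swapSeq]

lemma swapSeq_swapSeq (w : List (K × K)) : swapSeq (swapSeq w) = w := by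
  apply List.ext_getElem (by simp [length_swapSeq])
  intro k h1 h2
  rw [swapSeq_getElem]
  simp only [length_swapSeq]
  have hk : k < w.length := h2
  apply Prod.ext
  · -- first component
    show ((swapSeq w).getD (w.length - 1 - k) (0,0)).2
        - ((swapSeq w).getD (w.length - k) (0,0)).2 = (w[k]).1
    rw [getD_def, getD_def]
    rw [dif_pos (by simp only [length_swapSeq]; omega)]
    rw [swapSeq_getElem]
    simp only [length_swapSeq]
    rw [show w.length - (w.length - 1 - k) = k + 1 by omega]
    rw [sumTakeFst, show min (k+1) w.length = k + 1 by omega]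
    by_cases hk1 : 1 ≤ k
    · rw [dif_pos (by omega)]
      rw [swapSeq_getElem]
      simp only [length_swapSeq]
      rw [show w.length - (w.length - k) = k by omega]
      rw [sumTakeFst, show min k w.length = k by omega, Finset.sum_range_succ]
      rw [getD_def, dif_pos hk]
      ring
    · have hk0 : k = 0 := by omega
      subst hk0
      rw [dif_neg (by omega)]
      rw [Finset.sum_range_one, getD_def, dif_pos hk]
      ring
  · -- second component
    show (((swapSeq w).take (w.length - k)).map Prod.fst).sum = (w[k]).2
    rw [sumTakeFst]
    rw [length_swapSeq, show min (w.length - k) w.length = w.length - k by omega]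
    have hterm : ∀ j ∈ Finset.range (w.length - k), ((swapSeq w).getD j (0,0)).1
        = (fun m => (w.getD (w.length - m) (0,0)).2) (j+1)
          - (fun m => (w.getD (w.length - m) (0,0)).2) j := by
      intro j hj
      rw [Finset.mem_range] at hj
      rw [getD_def, dif_pos (by simp only [length_swapSeq]; omega), swapSeq_getElem]
      simp only [length_swapSeq]
      rw [show w.length - 1 - j = w.length - (j+1) by omega]
    rw [Finset.sum_congr rfl hterm, Finset.sum_range_sub
      (fun m => (w.getD (w.length - m) (0,0)).2) (w.length - k)]
    simp only [Nat.sub_zero, Nat.sub_sub_self (le_of_lt hk)]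
    rw [getD_def, dif_pos hk, getD_def, dif_neg (by omega)]
    ring

lemma pushSeq_ne_nil (w : List (K × K)) (hw : w ≠ []) :
    pushSeq w = (-(w.map Prod.fst).sum, -(w.getD (w.length - 1) (0,0)).2) ::
      (w.take (w.length - 1)).map
        (fun p => (p.1, p.2 - (w.getD (w.length - 1) (0,0)).2)) := by
  cases w with
  | nil => simp at hw
  | cons x xs => rfl

lemma sum_reflect_partial (f : ℕ → K) (r m : ℕ) (hm : m ≤ r) :
    ∑ j ∈ Finset.range m, f (r - 1 - j)
      = ∑ j ∈ Finset.range r, f j - ∑ j ∈ Finset.range (r - m), f j := by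
  induction m with
  | zero => simp
  | succ m ih =>
    rw [Finset.sum_range_succ, ih (by omega)]
    rw [show r - m = (r - (m+1)) + 1 by omega, Finset.sum_range_succ,
      show r - 1 - m = r - (m+1) by omega]
    ring

lemma key2 (w : List (K × K)) :
    swapSeq ((w.reverse).map (fun p : K × K => (-p.1, -p.2)))
      = pushSeq ((swapSeq w).reverse) := by
  rcases eq_or_ne w [] with rfl | hw
  · rfl
  have hr : 1 ≤ w.length := by
    cases w; · simp at hw
    · simp
  have hx : ∀ j, j < w.length →
      ((w.reverse.map (fun p : K × K => (-p.1, -p.2))).getD j (0,0))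
        = (-(w.getD (w.length - 1 - j) (0,0)).1, -(w.getD (w.length - 1 - j) (0,0)).2) := by
    intro j hj
    rw [getD_def, dif_pos (by simpa using hj)]
    rw [List.getElem_map, List.getElem_reverse,
      getD_def w (w.length - 1 - j), dif_pos (by omega)]
  have hy : ∀ j, j < w.length →
      (((swapSeq w).reverse).getD j (0,0))
        = ((w.getD j (0,0)).2 - (w.getD (j+1) (0,0)).2,
            ∑ t ∈ Finset.range (j+1), (w.getD t (0,0)).1) := by
    intro j hj
    rw [getD_def, dif_pos (by simp [length_swapSeq]; omega)]
    rw [List.getElem_reverse, swapSeq_getElem]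
    simp only [List.length_reverse, length_swapSeq]
    rw [show w.length - 1 - (w.length - 1 - j) = j by omega,
      show w.length - (w.length - 1 - j) = j + 1 by omega,
      sumTakeFst, show min (j+1) w.length = j+1 by omega]
  have hne : (swapSeq w).reverse ≠ [] :=
    List.ne_nil_of_length_pos (by simp only [List.length_reverse, length_swapSeq]; omega)
  have hvlast : (((swapSeq w).reverse).getD (w.length - 1) (0,0)).2
      = ∑ t ∈ Finset.range w.length, (w.getD t (0,0)).1 := by
    rw [hy (w.length - 1) (by omega), show w.length - 1 + 1 = w.length by omega]
  have hsumy : ((((swapSeq w).reverse)).map Prod.fst).sum = (w.getD 0 (0,0)).2 := by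
    rw [← List.take_length (l := (swapSeq w).reverse), sumTakeFst]
    simp only [List.length_reverse, length_swapSeq, min_self]
    have hterms : ∀ j ∈ Finset.range w.length, ((((swapSeq w).reverse)).getD j (0,0)).1
        = (fun m => (w.getD m (0,0)).2) j - (fun m => (w.getD m (0,0)).2) (j+1) := by
      intro j hj
      rw [Finset.mem_range] at hj
      rw [hy j hj]
    rw [Finset.sum_congr rfl hterms, Finset.sum_range_sub']
    rw [getD_def w w.length, dif_neg (by omega)]
    show (w.getD 0 (0,0)).2 - (0,0).2 = _
    simp
  apply List.ext_getElem
  · simp [length_swapSeq, length_pushSeq]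
  intro k h1 h2
  have hk : k < w.length := by simpa [length_swapSeq] using h1
  rw [swapSeq_getElem, ← List.getD_eq_getElem _ (0,0) h2, pushSeq_ne_nil _ hne]
  simp only [List.length_map, List.length_reverse, length_swapSeq]
  cases k with
  | zero =>
    rw [List.getD_cons_zero]
    simp only [Nat.sub_zero]
    rw [hx (w.length - 1) (by omega),
      List.getD_eq_default (w.reverse.map (fun p : K × K => (-p.1, -p.2))) (0,0)
        (n := w.length) (by simp),
      show w.length - 1 - (w.length - 1) = 0 by omega, hvlast, hsumy, sumTakeFst]
    simp only [List.length_map, List.length_reverse, min_self]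
    have hterms : ∀ j ∈ Finset.range w.length, ((w.reverse.map
          (fun p : K × K => (-p.1, -p.2))).getD j (0,0)).1
        = -((fun t => (w.getD t (0,0)).1) (w.length - 1 - j)) := by
      intro j hj
      rw [Finset.mem_range] at hj
      rw [hx j hj]
    rw [Finset.sum_congr rfl hterms, Finset.sum_neg_distrib,
      Finset.sum_range_reflect (fun t => (w.getD t (0,0)).1) w.length]
    apply Prod.ext <;> simp
  | succ j =>
    have hj : j + 1 < w.length := hk
    rw [List.getD_cons_succ]
    rw [getD_def ((((swapSeq w).reverse).take (w.length - 1)).map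
        (fun p => (p.1, p.2 - (((swapSeq w).reverse).getD (w.length - 1) (0,0)).2))) j,
      dif_pos (by
        simp only [List.length_map, List.length_take, List.length_reverse, length_swapSeq]
        omega),
      List.getElem_map, List.getElem_take,
      ← List.getD_eq_getElem ((swapSeq w).reverse) (0,0)
        (by simp only [List.length_reverse, length_swapSeq]; omega : j < ((swapSeq w).reverse).length),
      hy j (by omega), hvlast]
    rw [hx (w.length - 1 - (j+1)) (by omega), hx (w.length - (j+1)) (by omega),
      show w.length - 1 - (w.length - 1 - (j+1)) = j + 1 by omega,
      show w.length - 1 - (w.length - (j+1)) = j by omega,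
      sumTakeFst]
    simp only [List.length_map, List.length_reverse]
    rw [show min (w.length - (j+1)) w.length = w.length - (j+1) by omega]
    have hterms : ∀ t ∈ Finset.range (w.length - (j+1)), ((w.reverse.map
          (fun p : K × K => (-p.1, -p.2))).getD t (0,0)).1
        = -((fun s => (w.getD s (0,0)).1) (w.length - 1 - t)) := by
      intro t ht
      rw [Finset.mem_range] at ht
      rw [hx t (by omega)]
    rw [Finset.sum_congr rfl hterms, Finset.sum_neg_distrib,
      sum_reflect_partial (fun s => (w.getD s (0,0)).1) w.length (w.length - (j+1)) (by omega),
      show w.length - (w.length - (j+1)) = j + 1 by omega]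
    apply Prod.ext
    · show -(w.getD (j+1) (0,0)).2 - -(w.getD j (0,0)).2
        = ((w.getD j (0,0)).2 - (w.getD (j+1) (0,0)).2, _).1
      simp only
      ring
    · show -(∑ s ∈ Finset.range w.length, (w.getD s (0,0)).1
          - ∑ s ∈ Finset.range (j+1), (w.getD s (0,0)).1)
        = (_, (∑ t ∈ Finset.range (j+1), (w.getD t (0,0)).1)
            - ∑ t ∈ Finset.range w.length, (w.getD t (0,0)).1).2
      simp only
      ring

lemma key1 (w : List (K × K)) :
    swapSeq (pushSeq w)
      = ((swapSeq w.reverse).reverse).map (fun p : K × K => (-p.1, -p.2)) := by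
  have h := key2 (swapSeq w.reverse)
  rw [swapSeq_swapSeq, List.reverse_reverse] at h
  calc swapSeq (pushSeq w)
      = swapSeq (swapSeq (((swapSeq w.reverse).reverse).map
          (fun p : K × K => (-p.1, -p.2)))) := by rw [h]
    _ = _ := swapSeq_swapSeq _

lemma push_apply (A : Bimould K R) (w : List (K × K)) : push A w = A (pushSeq w) := by
  cases w <;> rfl

end Aux

/-- `push(swamu(A,B)) = answamu(push(B), push(A))`. -/
theorem stmt_9 (A B : Bimould K R) :
    push (swamu A B) = answamu (push B) (push A) := by
  funext w
  simp only [push_apply, swamu, answamu, swap, anti, mu]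
  rw [key1]
  simp only [List.length_map, List.length_reverse, length_swapSeq]
  rw [← Finset.sum_range_reflect (fun i =>
      B (pushSeq ((swapSeq ((swapSeq w.reverse).take i)).reverse))
        * A (pushSeq ((swapSeq ((swapSeq w.reverse).drop i)).reverse))) (w.length + 1)]
  apply Finset.sum_congr rfl
  intro i hi
  rw [Finset.mem_range] at hi
  simp only [Nat.add_sub_cancel]
  rw [← List.map_take, ← List.map_drop, List.take_reverse, List.drop_reverse]
  simp only [List.length_reverse, length_swapSeq]
  rw [key2, key2]
  exact mul_comm _ _
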